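/- arXiv:2203.11839 — 4 statements merged into one kernel-verified Lean document; each statement's English description precedes it below -/
import Mathlib

section
/- Let γ > 0 be a real number such that 1/2 − 1/γ − (π/(2γ²))(1 + π/4) ≥ 0, and let c = √(1/2 − 1/γ − (π/(2γ²))(1 + π/4)). Define x̄ : ℝ → ℝ by x̄(t) = 1/2 + π/(4γ) + c·sin(πt/2). Then x̄ is periodic with period 4 and for every t ∈ ℝ it satisfies the renewal equation x̄(t) = (γ/2) ∫_{−3}^{−1} x̄(t+θ)(1 − x̄(t+θ)) dθ. -/
open Real Set

theorem stmt_0 (γ : ℝ) (hγ : 0 < γ)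
    (hrad : (0:ℝ) ≤ 1/2 - 1/γ - (π/(2*γ^2))*(1+π/4))
    (c : ℝ) (hc : c = Real.sqrt (1/2 - 1/γ - (π/(2*γ^2))*(1+π/4)))
    (x : ℝ → ℝ) (hx : ∀ t, x t = 1/2 + π/(4*γ) + c * Real.sin (π*t/2)) :
    (∀ t, x (t + 4) = x t) ∧
    (∀ t, x t = (γ/2) * ∫ θ in (-3:ℝ)..(-1:ℝ), x (t+θ) * (1 - x (t+θ))) := by
  have hπ : (0:ℝ) < π := Real.pi_pos
  have hc2 : c^2 = 1/2 - 1/γ - (π/(2*γ^2))*(1+π/4) := by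
    rw [hc, Real.sq_sqrt hrad]
  constructor
  · intro t
    rw [hx, hx, show π*(t+4)/2 = π*t/2 + 2*π by ring, Real.sin_add_two_pi]
  · intro t
    set A : ℝ := 1/2 + π/(4*γ) with hA
    set G : ℝ → ℝ := fun θ =>
      (A*(1-A) - c^2/2)*θ - (2*c*(1-2*A)/π) * Real.cos (π*(t+θ)/2)
        + (c^2/(2*π)) * Real.sin (π*(t+θ)) with hG
    have hderiv : ∀ θ ∈ Set.uIcc (-3:ℝ) (-1:ℝ),
        HasDerivAt G (x (t+θ) * (1 - x (t+θ))) θ := by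
      intro θ _
      have h1 : HasDerivAt (fun θ : ℝ => π*(t+θ)/2) (π/2) θ := by
        have := (((hasDerivAt_id θ).const_add t).const_mul π).div_const 2
        simpa using this
      have h2 : HasDerivAt (fun θ : ℝ => π*(t+θ)) π θ := by
        have := ((hasDerivAt_id θ).const_add t).const_mul π
        simpa using this
      have hπ' : π ≠ 0 := hπ.ne'
      have hD : HasDerivAt G
          ((A*(1-A) - c^2/2)
            + c*(1-2*A) * Real.sin (π*(t+θ)/2)
            + (c^2/2) * Real.cos (π*(t+θ))) θ := by
        refine ((((hasDerivAt_id θ).const_mul (A*(1-A) - c^2/2)).sub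
            (h1.cos.const_mul (2*c*(1-2*A)/π))).add
            (h2.sin.const_mul (c^2/(2*π)))).congr_deriv ?_
        field_simp
        ring
      have harg : π*(t+θ) = 2*(π*(t+θ)/2) := by ring
      convert hD using 1
      have hcc : Real.cos (π*(t+θ)) = 2*Real.cos (π*(t+θ)/2)^2 - 1 := by
        rw [show π*(t+θ) = 2*(π*(t+θ)/2) by ring, Real.cos_two_mul]
        ring_nf
      rw [hx, hcc]
      linear_combination (-c^2) * Real.sin_sq_add_cos_sq (π*(t+θ)/2)
    have hcont : IntervalIntegrable (fun θ => x (t+θ) * (1 - x (t+θ)))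
        MeasureTheory.volume (-3:ℝ) (-1:ℝ) := by
      apply Continuous.intervalIntegrable
      have : Continuous fun θ : ℝ => x (t+θ) := by
        simp only [hx]; fun_prop
      exact this.mul (continuous_const.sub this)
    have hint := intervalIntegral.integral_eq_sub_of_hasDerivAt hderiv hcont
    rw [hint, hx]
    have e1 : Real.cos (π*(t + -1)/2) = Real.sin (π*t/2) := by
      rw [show π*(t + -1)/2 = π*t/2 - π/2 by ring, Real.cos_sub, Real.cos_pi_div_two,
        Real.sin_pi_div_two]
      ring
    have e3 : Real.cos (π*(t + -3)/2) = -Real.sin (π*t/2) := by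
      rw [show π*(t + -3)/2 = (π*t/2 - π/2) - π by ring, Real.cos_sub_pi, Real.cos_sub,
        Real.cos_pi_div_two, Real.sin_pi_div_two]
      ring
    have f1 : Real.sin (π*(t + -1)) = -Real.sin (π*t) := by
      rw [show π*(t + -1) = π*t - π by ring, Real.sin_sub_pi]
    have f3 : Real.sin (π*(t + -3)) = -Real.sin (π*t) := by
      rw [show π*(t + -3) = (π*t - π) - 2*π by ring, Real.sin_sub_two_pi, Real.sin_sub_pi]
    simp only [hG, e1, e3, f1, f3]
    rw [hc2, hA]
    field_simp
    ring
end

section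
/- Let γ > 0 be a real number such that 1/2 − 1/γ − (π/(2γ²))(1 + π/4) ≥ 0, let c = √(1/2 − 1/γ − (π/(2γ²))(1 + π/4)), and let x̄(t) = 1/2 + π/(4γ) + c·sin(πt/2). Then the derivative x̄′(t) = (cπ/2)·cos(πt/2) satisfies, for every t ∈ ℝ, the linearized renewal equation x̄′(t) = (γ/2) ∫_{−3}^{−1} (1 − 2x̄(t+θ)) x̄′(t+θ) dθ. In particular the linearized equation has a 4-periodic nonzero solution (corresponding to the trivial Floquet multiplier 1) whenever c > 0. -/
open Real Set

theorem stmt_1 (γ : ℝ) (hγ : 0 < γ)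
    (hrad : (0:ℝ) ≤ 1/2 - 1/γ - (π/(2*γ^2))*(1+π/4))
    (c : ℝ) (hc : c = Real.sqrt (1/2 - 1/γ - (π/(2*γ^2))*(1+π/4)))
    (x : ℝ → ℝ) (hx : ∀ t, x t = 1/2 + π/(4*γ) + c * Real.sin (π*t/2))
    (z : ℝ → ℝ) (hz : ∀ t, z t = (c*π/2) * Real.cos (π*t/2)) :
    (∀ t, HasDerivAt x (z t) t) ∧
    (∀ t, z t = (γ/2) * ∫ θ in (-3:ℝ)..(-1:ℝ), (1 - 2 * x (t+θ)) * z (t+θ)) ∧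
    (0 < c → (∀ t, z (t + 4) = z t) ∧ z ≠ 0) := by
  have hxf : x = fun t => 1/2 + π/(4*γ) + c * Real.sin (π*t/2) := funext hx
  have hzf : z = fun t => (c*π/2) * Real.cos (π*t/2) := funext hz
  subst hxf hzf
  have hγ' : γ ≠ 0 := ne_of_gt hγ
  refine ⟨?_, ?_, ?_⟩
  · intro t
    have h1 : HasDerivAt (fun t : ℝ => π*t/2) (π/2) t := by
      simpa using ((hasDerivAt_id t).const_mul π).div_const 2
    have h2 := (Real.hasDerivAt_sin (π*t/2)).comp t h1
    have h3 := (h2.const_mul c).const_add (1/2 + π/(4*γ))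
    refine h3.congr_deriv ?_
    beta_reduce
    ring
  · intro t
    -- antiderivative
    set F : ℝ → ℝ := fun θ => -(c*π/(2*γ)) * Real.sin (π*(t+θ)/2) + (c^2/2) * Real.cos (π*(t+θ)) with hF
    have hder : ∀ θ : ℝ, HasDerivAt F
        ((1 - 2 * ((fun t => 1/2 + π/(4*γ) + c * Real.sin (π*t/2)) (t+θ)))
          * ((fun t => (c*π/2) * Real.cos (π*t/2)) (t+θ))) θ := by
      intro θ
      have h1 : HasDerivAt (fun θ : ℝ => π*(t+θ)/2) (π/2) θ := by
        simpa using (((hasDerivAt_id θ).const_add t).const_mul π).div_const 2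
      have h1' : HasDerivAt (fun θ : ℝ => π*(t+θ)) π θ := by
        simpa using ((hasDerivAt_id θ).const_add t).const_mul π
      have h2 := ((Real.hasDerivAt_sin (π*(t+θ)/2)).comp θ h1).const_mul (-(c*π/(2*γ)))
      have h3 := ((Real.hasDerivAt_cos (π*(t+θ))).comp θ h1').const_mul ((c:ℝ)^2/2)
      have h4 := h2.add h3
      refine h4.congr_deriv ?_
      have hs : Real.sin (π*(t+θ)) = 2 * Real.sin (π*(t+θ)/2) * Real.cos (π*(t+θ)/2) := by
        have h5 := Real.sin_two_mul (π*(t+θ)/2)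
        rw [show 2*(π*(t+θ)/2) = π*(t+θ) by ring] at h5
        exact h5
      beta_reduce
      rw [hs]
      field_simp
      ring
    have hcont : Continuous (fun θ : ℝ =>
        (1 - 2 * ((fun t => 1/2 + π/(4*γ) + c * Real.sin (π*t/2)) (t+θ)))
          * ((fun t => (c*π/2) * Real.cos (π*t/2)) (t+θ))) := by
      fun_prop
    have hint := intervalIntegral.integral_eq_sub_of_hasDerivAt
      (fun θ _ => hder θ) (hcont.intervalIntegrable (-3) (-1))
    rw [hint]
    have e1 : Real.sin (π*(t+(-1))/2) = -Real.cos (π*t/2) := by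
      rw [show π*(t+(-1))/2 = π*t/2 - π/2 by ring, Real.sin_sub]
      simp
    have e2 : Real.sin (π*(t+(-3))/2) = Real.cos (π*t/2) := by
      rw [show π*(t+(-3))/2 = (π*t/2 + π/2) - 2*π by ring, Real.sin_sub_two_pi,
        Real.sin_add]
      simp
    have e3 : Real.cos (π*(t+(-1))) = -Real.cos (π*t) := by
      rw [show π*(t+(-1)) = π*t - π by ring, Real.cos_sub_pi]
    have e4 : Real.cos (π*(t+(-3))) = -Real.cos (π*t) := by
      rw [show π*(t+(-3)) = (π*t - π) - 2*π by ring, Real.cos_sub_two_pi, Real.cos_sub_pi]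
    simp only [hF, e1, e2, e3, e4]
    field_simp
    ring
  · intro hcpos
    constructor
    · intro t
      simp only []
      rw [show π*(t+4)/2 = π*t/2 + 2*π by ring, Real.cos_add_two_pi]
    · intro h
      have h0 := congrFun h 0
      simp only [Pi.zero_apply] at h0
      rw [show π*(0:ℝ)/2 = 0 by ring, Real.cos_zero, mul_one] at h0
      have : c*π/2 > 0 := by positivity
      linarith [h0, this]
end

section
/- Let n be a positive integer, τ > 0, T > 0, let A, B : ℝ → (ℝⁿ →L ℝⁿ) be continuous maps into the continuous linear endomorphisms of ℝⁿ, and let ψ : [−τ, 0] → ℝⁿ be continuous. Then there exists a unique continuous function y : [−τ, T] → ℝⁿ such that y(t) = ψ(t) for all t ∈ [−τ, 0] and y(t) = ψ(0) + ∫₀ᵗ (A(s)·y(s) + B(s)·y(s − τ)) ds for all t ∈ [0, T]. -/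
open Set MeasureTheory intervalIntegral Function

noncomputable section DDEAux

namespace DDE

variable {n : ℕ} {τ T : ℝ}

/-- Extension of a continuous map on `Icc (-τ) T` to `ℝ` by clamping. -/
def ext (hτT : (-τ : ℝ) ≤ T) (u : C(Icc (-τ : ℝ) T, Fin n → ℝ)) : ℝ → Fin n → ℝ :=
  IccExtend hτT u

lemma ext_cont (hτT : (-τ : ℝ) ≤ T) (u : C(Icc (-τ : ℝ) T, Fin n → ℝ)) :
    Continuous (ext hτT u) := u.continuous.Icc_extend'

lemma ext_of_mem (hτT : (-τ : ℝ) ≤ T) (u : C(Icc (-τ : ℝ) T, Fin n → ℝ)) {t : ℝ}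
    (ht : t ∈ Icc (-τ : ℝ) T) : ext hτT u t = u ⟨t, ht⟩ :=
  IccExtend_of_mem hτT u ht

variable (A B : ℝ → ((Fin n → ℝ) →L[ℝ] (Fin n → ℝ))) (ψ : ℝ → Fin n → ℝ)

def gmap (hτT : (-τ : ℝ) ≤ T) (u : C(Icc (-τ : ℝ) T, Fin n → ℝ)) : ℝ → Fin n → ℝ :=
  fun s => A s (ext hτT u s) + B s (ext hτT u (s - τ))

lemma gmap_cont (hA : Continuous A) (hB : Continuous B) (hτT : (-τ : ℝ) ≤ T)
    (u : C(Icc (-τ : ℝ) T, Fin n → ℝ)) : Continuous (gmap A B hτT u) :=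
  (hA.clm_apply (ext_cont hτT u)).add
    (hB.clm_apply ((ext_cont hτT u).comp (continuous_sub_right τ)))

def Fmap (hτT : (-τ : ℝ) ≤ T) (u : C(Icc (-τ : ℝ) T, Fin n → ℝ)) : ℝ → Fin n → ℝ :=
  fun t => ψ (max (-τ) (min t 0)) + ∫ s in (0 : ℝ)..(max t 0), gmap A B hτT u s

lemma Fmap_cont (hτ : 0 < τ) (hA : Continuous A) (hB : Continuous B)
    (hψ : ContinuousOn ψ (Icc (-τ) 0)) (hτT : (-τ : ℝ) ≤ T)
    (u : C(Icc (-τ : ℝ) T, Fin n → ℝ)) : Continuous (Fmap A B ψ hτT u) := by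
  apply Continuous.add
  · apply hψ.comp_continuous
    · exact continuous_const.max (continuous_id.min continuous_const)
    · intro t
      exact ⟨le_max_left _ _, max_le (by linarith) (min_le_right _ _)⟩
  · exact (intervalIntegral.continuous_primitive
      (fun a b => (gmap_cont A B hA hB hτT u).intervalIntegrable a b) 0).comp
      (continuous_id.max continuous_const)

def Phi (hτ : 0 < τ) (hA : Continuous A) (hB : Continuous B)
    (hψ : ContinuousOn ψ (Icc (-τ) 0)) (hτT : (-τ : ℝ) ≤ T) :
    C(Icc (-τ : ℝ) T, Fin n → ℝ) → C(Icc (-τ : ℝ) T, Fin n → ℝ) :=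
  fun u => ⟨fun t => Fmap A B ψ hτT u t.1,
    (Fmap_cont A B ψ hτ hA hB hψ hτT u).comp continuous_subtype_val⟩

lemma Fmap_of_nonpos (hτT : (-τ : ℝ) ≤ T) (u : C(Icc (-τ : ℝ) T, Fin n → ℝ)) {t : ℝ}
    (ht1 : -τ ≤ t) (ht2 : t ≤ 0) : Fmap A B ψ hτT u t = ψ t := by
  unfold Fmap
  rw [min_eq_left ht2, max_eq_right ht1, max_eq_right ht2,
    intervalIntegral.integral_same, add_zero]

lemma Fmap_of_nonneg (hτ : 0 < τ) (hτT : (-τ : ℝ) ≤ T) (u : C(Icc (-τ : ℝ) T, Fin n → ℝ))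
    {t : ℝ} (ht : 0 ≤ t) :
    Fmap A B ψ hτT u t = ψ 0 + ∫ s in (0 : ℝ)..t, gmap A B hτT u s := by
  unfold Fmap
  rw [min_eq_right ht, max_eq_right (by linarith : (-τ : ℝ) ≤ 0), max_eq_left ht]


lemma key (hτ : 0 < τ) (hT : 0 < T) (hA : Continuous A) (hB : Continuous B)
    (hψ : ContinuousOn ψ (Icc (-τ) 0)) (hτT : (-τ : ℝ) ≤ T)
    (L : ℝ) (hL0 : 0 ≤ L) (hL : ∀ s ∈ Icc (0 : ℝ) T, ‖A s‖ + ‖B s‖ ≤ L)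
    (u v : C(Icc (-τ : ℝ) T, Fin n → ℝ)) :
    ∀ m : ℕ, ∀ t : ℝ, ∀ ht : t ∈ Icc (-τ : ℝ) T,
      ‖(Phi A B ψ hτ hA hB hψ hτT)^[m] u ⟨t, ht⟩ - (Phi A B ψ hτ hA hB hψ hτT)^[m] v ⟨t, ht⟩‖
        ≤ L ^ m * (max t 0) ^ m / m.factorial * ‖u - v‖ := by
  set Φ := Phi A B ψ hτ hA hB hψ hτT with hΦ
  intro m
  induction m with
  | zero =>
    intro t ht
    have h1 : ‖u ⟨t, ht⟩ - v ⟨t, ht⟩‖ = ‖(u - v) ⟨t, ht⟩‖ := by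
      rw [ContinuousMap.sub_apply]
    simp only [iterate_zero, id_eq, pow_zero, Nat.factorial_zero, Nat.cast_one]
    rw [h1]
    calc ‖(u - v) ⟨t, ht⟩‖ ≤ ‖u - v‖ := ContinuousMap.norm_coe_le_norm _ _
      _ = 1 * 1 / 1 * ‖u - v‖ := by ring
  | succ m ih =>
    intro t ht
    set w₁ := Φ^[m] u with hw₁
    set w₂ := Φ^[m] v with hw₂
    set D := ‖u - v‖ with hD
    set t' := max t 0 with ht'def
    have ht'0 : 0 ≤ t' := le_max_right _ _
    have ht'T : t' ≤ T := max_le ht.2 hT.le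
    have hD0 : 0 ≤ D := norm_nonneg _
    have hfm : (0 : ℝ) < m.factorial := by exact_mod_cast m.factorial_pos
    -- integrability of the two gmaps
    have hi₁ : IntervalIntegrable (gmap A B hτT w₁) volume 0 t' :=
      (gmap_cont A B hA hB hτT w₁).intervalIntegrable _ _
    have hi₂ : IntervalIntegrable (gmap A B hτT w₂) volume 0 t' :=
      (gmap_cont A B hA hB hτT w₂).intervalIntegrable _ _
    have hsub : Φ^[m+1] u ⟨t, ht⟩ - Φ^[m+1] v ⟨t, ht⟩
        = ∫ s in (0 : ℝ)..t', (gmap A B hτT w₁ s - gmap A B hτT w₂ s) := by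
      rw [iterate_succ_apply', iterate_succ_apply', ← hw₁, ← hw₂]
      show Fmap A B ψ hτT w₁ t - Fmap A B ψ hτT w₂ t = _
      unfold Fmap
      rw [intervalIntegral.integral_sub hi₁ hi₂]
      abel
    -- pointwise bound on the integrand
    have hpt : ∀ s ∈ Set.uIoc (0 : ℝ) t',
        ‖gmap A B hτT w₁ s - gmap A B hτT w₂ s‖
          ≤ (L ^ (m + 1) / m.factorial * D) * s ^ m := by
      intro s hs
      rw [uIoc_of_le ht'0] at hs
      have hs0 : 0 < s := hs.1
      have hsT : s ≤ T := hs.2.trans ht'T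
      have hsIcc : s ∈ Icc (-τ : ℝ) T := ⟨by linarith, hsT⟩
      have hsτIcc : s - τ ∈ Icc (-τ : ℝ) T := ⟨by linarith, by linarith⟩
      have heq : gmap A B hτT w₁ s - gmap A B hτT w₂ s
          = A s (w₁ ⟨s, hsIcc⟩ - w₂ ⟨s, hsIcc⟩)
            + B s (w₁ ⟨s - τ, hsτIcc⟩ - w₂ ⟨s - τ, hsτIcc⟩) := by
        simp only [gmap, ext_of_mem hτT w₁ hsIcc, ext_of_mem hτT w₂ hsIcc,
          ext_of_mem hτT w₁ hsτIcc, ext_of_mem hτT w₂ hsτIcc, map_sub]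
        abel
      have ih₁ := ih s hsIcc
      have ih₂ := ih (s - τ) hsτIcc
      rw [max_eq_left hs0.le] at ih₁
      have h2 : L ^ m * max (s - τ) 0 ^ m / m.factorial * D
          ≤ L ^ m * s ^ m / m.factorial * D := by
        have hpow : (max (s - τ) 0) ^ m ≤ s ^ m :=
          pow_le_pow_left₀ (le_max_right _ _) (max_le (by linarith) hs0.le) m
        have : (0:ℝ) ≤ L ^ m / m.factorial * D := by positivity
        calc L ^ m * max (s - τ) 0 ^ m / m.factorial * D
            = (L ^ m / m.factorial * D) * (max (s - τ) 0) ^ m := by ring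
          _ ≤ (L ^ m / m.factorial * D) * s ^ m := by
              exact mul_le_mul_of_nonneg_left hpow this
          _ = L ^ m * s ^ m / m.factorial * D := by ring
      have hAB := hL s ⟨hs0.le, hsT⟩
      have hX : (0 : ℝ) ≤ L ^ m * s ^ m / m.factorial * D := by positivity
      calc ‖gmap A B hτT w₁ s - gmap A B hτT w₂ s‖
          ≤ ‖A s‖ * ‖w₁ ⟨s, hsIcc⟩ - w₂ ⟨s, hsIcc⟩‖
            + ‖B s‖ * ‖w₁ ⟨s - τ, hsτIcc⟩ - w₂ ⟨s - τ, hsτIcc⟩‖ := by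
            rw [heq]
            exact (norm_add_le _ _).trans
              (add_le_add ((A s).le_opNorm _) ((B s).le_opNorm _))
        _ ≤ ‖A s‖ * (L ^ m * s ^ m / m.factorial * D)
            + ‖B s‖ * (L ^ m * s ^ m / m.factorial * D) :=
            add_le_add (mul_le_mul_of_nonneg_left ih₁ (norm_nonneg _))
              (mul_le_mul_of_nonneg_left (ih₂.trans h2) (norm_nonneg _))
        _ = (‖A s‖ + ‖B s‖) * (L ^ m * s ^ m / m.factorial * D) := by ring
        _ ≤ L * (L ^ m * s ^ m / m.factorial * D) :=
            mul_le_mul_of_nonneg_right hAB hX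
        _ = (L ^ (m + 1) / m.factorial * D) * s ^ m := by ring
    have hboundInt : IntervalIntegrable
        (fun s => (L ^ (m + 1) / m.factorial * D) * s ^ m) volume 0 t' :=
      (continuous_const.mul (continuous_pow m)).intervalIntegrable _ _
    have hint : (∫ s in (0 : ℝ)..t', (L ^ (m + 1) / m.factorial * D) * s ^ m)
        = L ^ (m + 1) * t' ^ (m + 1) / (m + 1).factorial * D := by
      rw [intervalIntegral.integral_const_mul, integral_pow, Nat.factorial_succ]
      have h0 : (0 : ℝ) ^ (m + 1) = 0 := zero_pow (Nat.succ_ne_zero m)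
      rw [h0]
      push_cast
      field_simp
      ring
    have hnn : (0 : ℝ) ≤ L ^ (m + 1) * t' ^ (m + 1) / (m + 1).factorial * D := by
      positivity
    calc ‖Φ^[m+1] u ⟨t, ht⟩ - Φ^[m+1] v ⟨t, ht⟩‖
        = ‖∫ s in (0 : ℝ)..t', (gmap A B hτT w₁ s - gmap A B hτT w₂ s)‖ := by rw [hsub]
      _ ≤ |∫ s in (0 : ℝ)..t', (L ^ (m + 1) / m.factorial * D) * s ^ m| :=
          (intervalIntegral.norm_integral_le_of_norm_le ht'0
            (ae_of_all _ fun s hs => hpt s (by rwa [uIoc_of_le ht'0])) hboundInt).trans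
            (le_abs_self _)
      _ = L ^ (m + 1) * t' ^ (m + 1) / (m + 1).factorial * D := by
          rw [hint, abs_of_nonneg hnn]

end DDE

end DDEAux

theorem stmt_5 (n : ℕ) (hn : 0 < n) (τ T : ℝ) (hτ : 0 < τ) (hT : 0 < T)
    (A B : ℝ → ((Fin n → ℝ) →L[ℝ] (Fin n → ℝ))) (hA : Continuous A) (hB : Continuous B)
    (ψ : ℝ → Fin n → ℝ) (hψ : ContinuousOn ψ (Set.Icc (-τ) 0)) :
    ∃ y : ℝ → Fin n → ℝ,
      (ContinuousOn y (Set.Icc (-τ) T) ∧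
        (∀ t ∈ Set.Icc (-τ) (0:ℝ), y t = ψ t) ∧
        (∀ t ∈ Set.Icc (0:ℝ) T,
          y t = ψ 0 + ∫ s in (0:ℝ)..t, (A s (y s) + B s (y (s - τ))))) ∧
      (∀ y' : ℝ → Fin n → ℝ,
        (ContinuousOn y' (Set.Icc (-τ) T) ∧
          (∀ t ∈ Set.Icc (-τ) (0:ℝ), y' t = ψ t) ∧
          (∀ t ∈ Set.Icc (0:ℝ) T,
            y' t = ψ 0 + ∫ s in (0:ℝ)..t, (A s (y' s) + B s (y' (s - τ))))) →
        Set.EqOn y' y (Set.Icc (-τ) T)) := by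
  have hτT : (-τ : ℝ) ≤ T := by linarith
  set Φ := DDE.Phi A B ψ hτ hA hB hψ hτT with hΦ
  -- a bound for the coefficients
  obtain ⟨L₀, hL₀⟩ :=
    isCompact_Icc.exists_bound_of_continuousOn (s := Icc (0:ℝ) T)
      (hA.norm.add hB.norm).continuousOn
  set L := max L₀ 0 with hLdef
  have hL0 : (0:ℝ) ≤ L := le_max_right _ _
  have hL : ∀ s ∈ Icc (0:ℝ) T, ‖A s‖ + ‖B s‖ ≤ L := by
    intro s hs
    have h1 := hL₀ s hs
    rw [Real.norm_eq_abs] at h1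
    exact ((le_abs_self _).trans h1).trans (le_max_left _ _)
  -- Lipschitz bound for iterates of Φ
  have hiter : ∀ (m : ℕ) (u v : C(Icc (-τ:ℝ) T, Fin n → ℝ)),
      dist (Φ^[m] u) (Φ^[m] v) ≤ (L * T) ^ m / m.factorial * dist u v := by
    intro m u v
    rw [dist_eq_norm, dist_eq_norm]
    have hC : (0:ℝ) ≤ (L * T) ^ m / m.factorial * ‖u - v‖ := by positivity
    rw [ContinuousMap.norm_le _ hC]
    rintro ⟨t, ht⟩
    rw [ContinuousMap.sub_apply]
    refine (DDE.key A B ψ hτ hT hA hB hψ hτT L hL0 hL u v m t ht).trans ?_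
    have hmax : (max t 0) ^ m ≤ T ^ m :=
      pow_le_pow_left₀ (le_max_right _ _) (max_le ht.2 hT.le) m
    calc L ^ m * (max t 0) ^ m / m.factorial * ‖u - v‖
        = (L ^ m / m.factorial * ‖u - v‖) * (max t 0) ^ m := by ring
      _ ≤ (L ^ m / m.factorial * ‖u - v‖) * T ^ m :=
          mul_le_mul_of_nonneg_left hmax (by positivity)
      _ = (L * T) ^ m / m.factorial * ‖u - v‖ := by rw [mul_pow]; ring
  -- choose m making the iterate a contraction
  have htend : Filter.Tendsto (fun m : ℕ => (L * T) ^ m / m.factorial)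
      Filter.atTop (nhds 0) := FloorSemiring.tendsto_pow_div_factorial_atTop (L * T)
  obtain ⟨m, hm⟩ := (htend.eventually (gt_mem_nhds one_pos)).exists
  have hmnn : (0:ℝ) ≤ (L * T) ^ m / m.factorial := by positivity
  set K : NNReal := ⟨(L * T) ^ m / m.factorial, hmnn⟩ with hK
  haveI : Nonempty (C(Icc (-τ:ℝ) T, Fin n → ℝ)) := ⟨ContinuousMap.const _ 0⟩
  have hcon : ContractingWith K (Φ^[m]) := by
    constructor
    · exact_mod_cast hm
    · exact LipschitzWith.of_dist_le_mul fun u v => hiter m u v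
  set x := ContractingWith.fixedPoint (Φ^[m]) hcon with hx
  have hxfix : Function.IsFixedPt (Φ^[m]) x := ContractingWith.fixedPoint_isFixedPt hcon
  have hfixΦ : Φ x = x := by
    have h1 : Function.IsFixedPt (Φ^[m]) (Φ x) := by
      show Φ^[m] (Φ x) = Φ x
      rw [← Function.iterate_succ_apply, Function.iterate_succ_apply']
      show Φ (Φ^[m] x) = Φ x
      rw [hxfix.eq]
    exact hcon.fixedPoint_unique' h1 hxfix
  have huniq : ∀ z : C(Icc (-τ:ℝ) T, Fin n → ℝ), Φ z = z → z = x := fun z hz =>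
    hcon.fixedPoint_unique' (Function.IsFixedPt.iterate hz m) hxfix
  refine ⟨DDE.ext hτT x, ⟨(DDE.ext_cont hτT x).continuousOn, ?_, ?_⟩, ?_⟩
  · intro t ht
    have htm : t ∈ Icc (-τ:ℝ) T := ⟨ht.1, ht.2.trans hT.le⟩
    rw [DDE.ext_of_mem hτT x htm, ← hfixΦ]
    show DDE.Fmap A B ψ hτT x t = ψ t
    exact DDE.Fmap_of_nonpos A B ψ hτT x ht.1 ht.2
  · intro t ht
    have htm : t ∈ Icc (-τ:ℝ) T := ⟨by linarith [ht.1], ht.2⟩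
    rw [DDE.ext_of_mem hτT x htm]
    conv_lhs => rw [← hfixΦ]
    show DDE.Fmap A B ψ hτT x t = _
    rw [DDE.Fmap_of_nonneg A B ψ hτ hτT x ht.1]
    simp only [DDE.gmap]
  · rintro y' ⟨hc', hinit', hint'⟩ t ht
    set x' : C(Icc (-τ:ℝ) T, Fin n → ℝ) := ⟨Set.restrict _ y', hc'.restrict⟩ with hx'
    have hfix' : Φ x' = x' := by
      apply ContinuousMap.ext
      rintro ⟨t₀, ht₀⟩
      show DDE.Fmap A B ψ hτT x' t₀ = y' t₀
      rcases le_total t₀ 0 with h0 | h0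
      · rw [DDE.Fmap_of_nonpos A B ψ hτT x' ht₀.1 h0]
        exact (hinit' t₀ ⟨ht₀.1, h0⟩).symm
      · rw [DDE.Fmap_of_nonneg A B ψ hτ hτT x' h0, hint' t₀ ⟨h0, ht₀.2⟩]
        congr 1
        apply intervalIntegral.integral_congr
        intro s hs
        rw [uIcc_of_le h0] at hs
        have hsIcc : s ∈ Icc (-τ:ℝ) T := ⟨by linarith [hs.1], hs.2.trans ht₀.2⟩
        have hsτIcc : s - τ ∈ Icc (-τ:ℝ) T :=
          ⟨by linarith [hs.1], by linarith [hs.2.trans ht₀.2]⟩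
        simp only [DDE.gmap, DDE.ext_of_mem hτT x' hsIcc, DDE.ext_of_mem hτT x' hsτIcc]
        rfl
    have hxx : x' = x := huniq x' hfix'
    calc y' t = x' ⟨t, ht⟩ := rfl
      _ = x ⟨t, ht⟩ := by rw [hxx]
      _ = DDE.ext hτT x t := (DDE.ext_of_mem hτT x ht).symm
end

section
/- Let n be a positive integer, τ > 0, T > 0, let A, B : ℝ → (ℝⁿ →L ℝⁿ) be continuous maps into the continuous linear endomorphisms of ℝⁿ, and let ψ : [−τ, 0] → ℝⁿ be continuous. For a continuous z : [0, T] → ℝⁿ, define V(ψ, z) : [−τ, T] → ℝⁿ by V(ψ, z)(t) = ψ(t) for t ∈ [−τ, 0] and V(ψ, z)(t) = ψ(0) + ∫₀ᵗ z(σ) dσ for t ∈ [0, T]. Then there exists a unique continuous z* : [0, T] → ℝⁿ satisfying the fixed point equation z*(t) = A(t)·V(ψ, z*)(t) + B(t)·V(ψ, z*)(t − τ) for all t ∈ [0, T]; moreover y := V(ψ, z*) is the unique continuous solution of the integrated initial value problem (y = ψ on [−τ, 0] and y(t) = ψ(0) + ∫₀ᵗ (A(s)y(s) + B(s)y(s −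 τ)) ds for t ∈ [0, T]), and z*(t) is the derivative of y at every t ∈ (0, T). -/
open Set

/-- The operator `V` constructing from an initial function `ψ` on `[-τ, 0]` and a
prescribed derivative `z` on `[0, T]` the function equal to `ψ` for `t ≤ 0` and to
`ψ 0 + ∫₀ᵗ z` for `t ≥ 0`. -/
noncomputable def Vop (n : ℕ) (ψ z : ℝ → Fin n → ℝ) : ℝ → Fin n → ℝ :=
  fun t => if t ≤ 0 then ψ t else ψ 0 + ∫ σ in (0:ℝ)..t, z σ

lemma vop_continuous {n : ℕ} {ψ z : ℝ → Fin n → ℝ} (hψ : Continuous ψ) (hz : Continuous z) :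
    Continuous (Vop n ψ z) := by
  have hint : Continuous fun t : ℝ => ∫ σ in (0:ℝ)..t, z σ :=
    intervalIntegral.continuous_primitive (fun a b => hz.intervalIntegrable a b) 0
  refine Continuous.if_le hψ (continuous_const.add hint) continuous_id continuous_const ?_
  intro t ht
  change t = 0 at ht
  subst ht
  simp

lemma vop_sub {n : ℕ} (ψ : ℝ → Fin n → ℝ) {z₁ z₂ : ℝ → Fin n → ℝ}
    (hz₁ : Continuous z₁) (hz₂ : Continuous z₂) (t : ℝ) :
    Vop n ψ z₁ t - Vop n ψ z₂ t =
      if t ≤ 0 then 0 else ∫ σ in (0:ℝ)..t, (z₁ σ - z₂ σ) := by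
  unfold Vop
  split_ifs
  · simp
  · rw [intervalIntegral.integral_sub (hz₁.intervalIntegrable _ _) (hz₂.intervalIntegrable _ _)]
    abel

theorem stmt_6 (n : ℕ) (hn : 0 < n) (τ T : ℝ) (hτ : 0 < τ) (hT : 0 < T)
    (A B : ℝ → ((Fin n → ℝ) →L[ℝ] (Fin n → ℝ))) (hA : Continuous A) (hB : Continuous B)
    (ψ : ℝ → Fin n → ℝ) (hψ : ContinuousOn ψ (Set.Icc (-τ) 0)) :
    ∃ z : ℝ → Fin n → ℝ,
      -- z* is a continuous solution of the fixed point equation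
      (ContinuousOn z (Set.Icc (0:ℝ) T) ∧
        (∀ t ∈ Set.Icc (0:ℝ) T,
          z t = A t (Vop n ψ z t) + B t (Vop n ψ z (t - τ)))) ∧
      -- z* is the unique such solution
      (∀ z' : ℝ → Fin n → ℝ,
        (ContinuousOn z' (Set.Icc (0:ℝ) T) ∧
          (∀ t ∈ Set.Icc (0:ℝ) T,
            z' t = A t (Vop n ψ z' t) + B t (Vop n ψ z' (t - τ)))) →
        Set.EqOn z' z (Set.Icc (0:ℝ) T)) ∧
      -- y := V(ψ, z*) solves the integrated initial value problem
      (ContinuousOn (Vop n ψ z) (Set.Icc (-τ) T) ∧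
        (∀ t ∈ Set.Icc (-τ) (0:ℝ), Vop n ψ z t = ψ t) ∧
        (∀ t ∈ Set.Icc (0:ℝ) T,
          Vop n ψ z t =
            ψ 0 + ∫ s in (0:ℝ)..t, (A s (Vop n ψ z s) + B s (Vop n ψ z (s - τ))))) ∧
      -- and it is the unique continuous solution of that problem
      (∀ y : ℝ → Fin n → ℝ,
        (ContinuousOn y (Set.Icc (-τ) T) ∧
          (∀ t ∈ Set.Icc (-τ) (0:ℝ), y t = ψ t) ∧
          (∀ t ∈ Set.Icc (0:ℝ) T,
            y t = ψ 0 + ∫ s in (0:ℝ)..t, (A s (y s) + B s (y (s - τ))))) →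
        Set.EqOn y (Vop n ψ z) (Set.Icc (-τ) T)) ∧
      -- z* is the derivative of y on (0, T)
      (∀ t ∈ Set.Ioo (0:ℝ) T, HasDerivAt (Vop n ψ z) (z t) t) := by
  have hτ' : (-τ : ℝ) ≤ 0 := by linarith
  have hTle : (0:ℝ) ≤ T := hT.le
  -- continuous extension of ψ
  set ψ' : ℝ → Fin n → ℝ := IccExtend hτ' ((Icc (-τ) 0).restrict ψ) with hψ'def
  have hψ'c : Continuous ψ' := (continuousOn_iff_continuous_restrict.mp hψ).Icc_extend'
  have hψ'eq : ∀ t ∈ Icc (-τ) (0:ℝ), ψ' t = ψ t := by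
    intro t ht
    rw [hψ'def, IccExtend_of_mem hτ' _ ht]
    rfl
  have hψ'0 : ψ' 0 = ψ 0 := hψ'eq 0 ⟨hτ', le_refl 0⟩
  have hVagree : ∀ (z : ℝ → Fin n → ℝ) (t : ℝ), -τ ≤ t → Vop n ψ z t = Vop n ψ' z t := by
    intro z t ht
    unfold Vop
    split_ifs with h
    · exact (hψ'eq t ⟨ht, h⟩).symm
    · rw [hψ'0]
  -- the space of candidate derivatives
  haveI : Nonempty C(Icc (0:ℝ) T, Fin n → ℝ) := ⟨ContinuousMap.const _ 0⟩
  -- extension of u to ℝ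
  set zf : C(Icc (0:ℝ) T, Fin n → ℝ) → ℝ → Fin n → ℝ :=
    fun u t => u (projIcc 0 T hTle t) with hzfdef
  have hzfc : ∀ u, Continuous (zf u) := fun u => u.continuous.comp continuous_projIcc
  have hzf_eq : ∀ (u : C(Icc (0:ℝ) T, Fin n → ℝ)) (t : ℝ) (ht : t ∈ Icc (0:ℝ) T),
      zf u t = u ⟨t, ht⟩ := by
    intro u t ht
    simp [hzfdef, projIcc_of_mem hTle ht]
  -- Vop with ψ' only depends on z through its values on [0, T]
  have hVcongr : ∀ (z₁ z₂ : ℝ → Fin n → ℝ), EqOn z₁ z₂ (Icc (0:ℝ) T) →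
      ∀ s : ℝ, s ≤ T → Vop n ψ' z₁ s = Vop n ψ' z₂ s := by
    intro z₁ z₂ hz s hsT
    unfold Vop
    split_ifs with h
    · rfl
    · push_neg at h
      congr 1
      apply intervalIntegral.integral_congr
      intro σ hσ
      rw [uIcc_of_le h.le] at hσ
      exact hz ⟨hσ.1, hσ.2.trans hsT⟩
  -- the Picard operator
  have keyc : ∀ u : C(Icc (0:ℝ) T, Fin n → ℝ), Continuous fun t : Icc (0:ℝ) T =>
      A t (Vop n ψ' (zf u) t) + B t (Vop n ψ' (zf u) ((t:ℝ) - τ)) := by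
    intro u
    have hV : Continuous (Vop n ψ' (zf u)) := vop_continuous hψ'c (hzfc u)
    exact ((hA.comp continuous_subtype_val).clm_apply (hV.comp continuous_subtype_val)).add
      ((hB.comp continuous_subtype_val).clm_apply
        (hV.comp (continuous_subtype_val.sub continuous_const)))
  set Φ : C(Icc (0:ℝ) T, Fin n → ℝ) → C(Icc (0:ℝ) T, Fin n → ℝ) :=
    fun u => ContinuousMap.mk _ (keyc u) with hΦdef
  have hΦapply : ∀ (u : C(Icc (0:ℝ) T, Fin n → ℝ)) (t : Icc (0:ℝ) T),
      Φ u t = A t (Vop n ψ' (zf u) t) + B t (Vop n ψ' (zf u) ((t:ℝ) - τ)) := by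
    intro u t; rfl
  -- bound on the coefficients
  obtain ⟨C, hC⟩ := (isCompact_Icc (a := (0:ℝ)) (b := T)).exists_bound_of_continuousOn
    (f := fun t => (‖A t‖ + ‖B t‖ : ℝ)) ((hA.norm.add hB.norm).continuousOn)
  set M : ℝ := max C 0 with hMdef
  have hM0 : (0:ℝ) ≤ M := le_max_right _ _
  have hMb : ∀ t ∈ Icc (0:ℝ) T, ‖A t‖ + ‖B t‖ ≤ M := by
    intro t ht
    calc ‖A t‖ + ‖B t‖ ≤ ‖(‖A t‖ + ‖B t‖ : ℝ)‖ := le_abs_self _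
    _ ≤ C := hC t ht
    _ ≤ M := le_max_left _ _
  -- the key iterate estimate
  have keyest : ∀ (u v : C(Icc (0:ℝ) T, Fin n → ℝ)) (k : ℕ) (t : Icc (0:ℝ) T),
      ‖(Φ^[k] u) t - (Φ^[k] v) t‖ ≤ M ^ k * (t:ℝ) ^ k / (k.factorial : ℝ) * dist u v := by
    intro u v k
    induction k with
    | zero =>
      intro t
      simpa [dist_eq_norm] using ContinuousMap.dist_apply_le_dist (f := u) (g := v) t
    | succ k ih =>
      intro t
      rw [Function.iterate_succ_apply', Function.iterate_succ_apply']
      set u' := Φ^[k] u with hu'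
      set v' := Φ^[k] v with hv'
      have hfact : (0:ℝ) < (k.factorial : ℝ) := by exact_mod_cast k.factorial_pos
      have ht0 : (0:ℝ) ≤ (t:ℝ) := t.2.1
      have htT : (t:ℝ) ≤ T := t.2.2
      have hrhs : (0:ℝ) ≤ M ^ k * (t:ℝ) ^ (k+1) / ((k+1).factorial : ℝ) * dist u v := by
        apply mul_nonneg _ dist_nonneg
        apply div_nonneg (mul_nonneg (pow_nonneg hM0 _) (pow_nonneg ht0 _))
        positivity
      -- bound on the difference of the V's
      have hΔ : ∀ s : ℝ, s ≤ (t:ℝ) →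
          ‖Vop n ψ' (zf u') s - Vop n ψ' (zf v') s‖ ≤
            M ^ k * (t:ℝ) ^ (k+1) / ((k+1).factorial : ℝ) * dist u v := by
        intro s hs
        rw [vop_sub ψ' (hzfc u') (hzfc v')]
        split_ifs with h
        · simpa using hrhs
        · push_neg at h
          have hbound : ∀ σ ∈ Set.uIoc (0:ℝ) s, ‖zf u' σ - zf v' σ‖ ≤
              M ^ k * σ ^ k / (k.factorial : ℝ) * dist u v := by
            intro σ hσ
            rw [uIoc_of_le h.le] at hσ
            have hσm : σ ∈ Icc (0:ℝ) T := ⟨hσ.1.le, hσ.2.trans (hs.trans htT)⟩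
            rw [hzf_eq u' σ hσm, hzf_eq v' σ hσm]
            exact ih ⟨σ, hσm⟩
          have hgint : IntervalIntegrable
              (fun σ : ℝ => M ^ k * σ ^ k / (k.factorial : ℝ) * dist u v)
              MeasureTheory.volume 0 s :=
            (Continuous.intervalIntegrable
              (((continuous_const.mul (continuous_pow k)).div_const _).mul continuous_const) 0 s)
          calc ‖∫ σ in (0:ℝ)..s, (zf u' σ - zf v' σ)‖
              ≤ |∫ σ in (0:ℝ)..s, M ^ k * σ ^ k / (k.factorial : ℝ) * dist u v| := by
                apply intervalIntegral.norm_integral_le_abs_of_norm_le _ hgint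
                exact MeasureTheory.ae_restrict_of_forall_mem measurableSet_uIoc hbound
            _ = |M ^ k / (k.factorial : ℝ) * dist u v * (s ^ (k+1) / (k+1))| := by
                congr 1
                have hc : ∀ σ : ℝ, M ^ k * σ ^ k / (k.factorial : ℝ) * dist u v =
                    (M ^ k / (k.factorial : ℝ) * dist u v) * σ ^ k := by intro σ; ring
                simp only [hc]
                rw [intervalIntegral.integral_const_mul, integral_pow]
                ring
            _ ≤ M ^ k * (t:ℝ) ^ (k+1) / ((k+1).factorial : ℝ) * dist u v := by
                rw [abs_of_nonneg (by
                  apply mul_nonneg (mul_nonneg (div_nonneg (pow_nonneg hM0 _) hfact.le)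
                    dist_nonneg)
                  positivity)]
                have hsp : s ^ (k+1) ≤ (t:ℝ) ^ (k+1) := pow_le_pow_left₀ h.le hs _
                have hre : M ^ k * (t:ℝ) ^ (k+1) / ((k+1).factorial : ℝ) * dist u v =
                    M ^ k / (k.factorial : ℝ) * dist u v * ((t:ℝ) ^ (k+1) / (k+1)) := by
                  rw [Nat.factorial_succ]
                  push_cast
                  field_simp
                rw [hre]
                have hnn : (0:ℝ) ≤ M ^ k / (k.factorial : ℝ) * dist u v :=
                  mul_nonneg (div_nonneg (pow_nonneg hM0 _) hfact.le) dist_nonneg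
                apply mul_le_mul_of_nonneg_left _ hnn
                apply div_le_div_of_nonneg_right hsp
                positivity
      -- assemble
      have hBd := hΔ ((t:ℝ) - τ) (by linarith)
      have hBt := hΔ (t:ℝ) le_rfl
      rw [hΦapply, hΦapply]
      have hre : A (t:ℝ) (Vop n ψ' (zf u') t) + B (t:ℝ) (Vop n ψ' (zf u') ((t:ℝ) - τ)) -
          (A (t:ℝ) (Vop n ψ' (zf v') t) + B (t:ℝ) (Vop n ψ' (zf v') ((t:ℝ) - τ))) =
          A (t:ℝ) (Vop n ψ' (zf u') t - Vop n ψ' (zf v') t) +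
          B (t:ℝ) (Vop n ψ' (zf u') ((t:ℝ) - τ) - Vop n ψ' (zf v') ((t:ℝ) - τ)) := by
        rw [map_sub, map_sub]; abel
      rw [hre]
      calc ‖A (t:ℝ) (Vop n ψ' (zf u') t - Vop n ψ' (zf v') t) +
            B (t:ℝ) (Vop n ψ' (zf u') ((t:ℝ) - τ) - Vop n ψ' (zf v') ((t:ℝ) - τ))‖
          ≤ ‖A (t:ℝ) (Vop n ψ' (zf u') t - Vop n ψ' (zf v') t)‖ +
            ‖B (t:ℝ) (Vop n ψ' (zf u') ((t:ℝ) - τ) - Vop n ψ' (zf v') ((t:ℝ) - τ))‖ :=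
            norm_add_le _ _
        _ ≤ ‖A (t:ℝ)‖ * (M ^ k * (t:ℝ) ^ (k+1) / ((k+1).factorial : ℝ) * dist u v) +
            ‖B (t:ℝ)‖ * (M ^ k * (t:ℝ) ^ (k+1) / ((k+1).factorial : ℝ) * dist u v) := by
            apply add_le_add
            · exact ((A (t:ℝ)).le_opNorm _).trans
                (mul_le_mul_of_nonneg_left hBt (norm_nonneg _))
            · exact ((B (t:ℝ)).le_opNorm _).trans
                (mul_le_mul_of_nonneg_left hBd (norm_nonneg _))
        _ = (‖A (t:ℝ)‖ + ‖B (t:ℝ)‖) *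
              (M ^ k * (t:ℝ) ^ (k+1) / ((k+1).factorial : ℝ) * dist u v) := by ring
        _ ≤ M * (M ^ k * (t:ℝ) ^ (k+1) / ((k+1).factorial : ℝ) * dist u v) :=
            mul_le_mul_of_nonneg_right (hMb _ t.2) hrhs
        _ = M ^ (k+1) * (t:ℝ) ^ (k+1) / ((k+1).factorial : ℝ) * dist u v := by
            rw [pow_succ]; ring
  -- a Lipschitz bound for the iterates
  have hdist : ∀ (k : ℕ) (u v : C(Icc (0:ℝ) T, Fin n → ℝ)),
      dist (Φ^[k] u) (Φ^[k] v) ≤ (M * T) ^ k / (k.factorial : ℝ) * dist u v := by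
    intro k u v
    have h0 : (0:ℝ) ≤ (M * T) ^ k / (k.factorial : ℝ) * dist u v :=
      mul_nonneg (div_nonneg (pow_nonneg (mul_nonneg hM0 hTle) _) (Nat.cast_nonneg _))
        dist_nonneg
    rw [ContinuousMap.dist_le h0]
    intro t
    rw [dist_eq_norm]
    calc ‖(Φ^[k] u) t - (Φ^[k] v) t‖
        ≤ M ^ k * (t:ℝ) ^ k / (k.factorial : ℝ) * dist u v := keyest u v k t
      _ ≤ (M * T) ^ k / (k.factorial : ℝ) * dist u v := by
          rw [mul_pow]
          have htk : (t:ℝ) ^ k ≤ T ^ k := pow_le_pow_left₀ t.2.1 t.2.2 _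
          apply mul_le_mul_of_nonneg_right _ dist_nonneg
          apply div_le_div_of_nonneg_right _ (by exact_mod_cast k.factorial_pos.le)
          exact mul_le_mul_of_nonneg_left htk (pow_nonneg hM0 _)
  -- choose an iterate that contracts
  obtain ⟨k, hk⟩ : ∃ k : ℕ, (M * T) ^ k / (k.factorial : ℝ) < 1 :=
    ((FloorSemiring.tendsto_pow_div_factorial_atTop (M * T)).eventually
      (gt_mem_nhds one_pos)).exists
  have hKnn : (0:ℝ) ≤ (M * T) ^ k / (k.factorial : ℝ) :=
    div_nonneg (pow_nonneg (mul_nonneg hM0 hTle) _) (Nat.cast_nonneg _)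
  set K : NNReal := ⟨(M * T) ^ k / (k.factorial : ℝ), hKnn⟩ with hKdef
  have hcontr : ContractingWith K (Φ^[k]) := by
    constructor
    · exact_mod_cast hk
    · exact LipschitzWith.of_dist_le_mul fun u v => hdist k u v
  set ustar := ContractingWith.fixedPoint (Φ^[k]) hcontr with hustardef
  have hfix : Function.IsFixedPt Φ ustar := hcontr.isFixedPt_fixedPoint_iterate
  have huniq : ∀ u, Function.IsFixedPt Φ u → u = ustar := fun u hu =>
    hcontr.fixedPoint_unique (hu.iterate k)
  -- the solution
  set z : ℝ → Fin n → ℝ := zf ustar with hzdef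
  have hzc : Continuous z := hzfc ustar
  have hzval : ∀ (t : ℝ) (ht : t ∈ Icc (0:ℝ) T), z t = ustar ⟨t, ht⟩ :=
    fun t ht => hzf_eq ustar t ht
  -- the fixed point equation in the stated form
  have heq : ∀ t ∈ Icc (0:ℝ) T, z t = A t (Vop n ψ z t) + B t (Vop n ψ z (t - τ)) := by
    intro t ht
    calc z t = ustar ⟨t, ht⟩ := hzval t ht
      _ = Φ ustar ⟨t, ht⟩ := (DFunLike.congr_fun hfix ⟨t, ht⟩).symm
      _ = A t (Vop n ψ' z t) + B t (Vop n ψ' z (t - τ)) := hΦapply ustar ⟨t, ht⟩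
      _ = A t (Vop n ψ z t) + B t (Vop n ψ z (t - τ)) := by
          rw [← hVagree z t (by linarith [ht.1]), ← hVagree z (t - τ) (by linarith [ht.1])]
  -- uniqueness of the fixed point in the stated form
  have huz : ∀ z' : ℝ → Fin n → ℝ, ContinuousOn z' (Icc (0:ℝ) T) →
      (∀ t ∈ Icc (0:ℝ) T, z' t = A t (Vop n ψ z' t) + B t (Vop n ψ z' (t - τ))) →
      EqOn z' z (Icc (0:ℝ) T) := by
    intro z' hc hfp
    set u' : C(Icc (0:ℝ) T, Fin n → ℝ) :=
      ContinuousMap.mk ((Icc (0:ℝ) T).restrict z')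
        (continuousOn_iff_continuous_restrict.mp hc) with hu'def
    have hzfu' : ∀ s : ℝ, s ≤ T → Vop n ψ' (zf u') s = Vop n ψ' z' s := by
      intro s hsT
      refine hVcongr _ _ (fun σ hσ => ?_) s hsT
      rw [hzf_eq u' σ hσ]
      rfl
    have hufix : Function.IsFixedPt Φ u' := by
      apply ContinuousMap.ext
      intro t
      have ht' : (t:ℝ) ∈ Icc (0:ℝ) T := t.2
      rw [hΦapply, hzfu' t ht'.2, hzfu' ((t:ℝ) - τ) (by linarith [ht'.2]),
        ← hVagree z' t (by linarith [ht'.1]), ← hVagree z' ((t:ℝ) - τ) (by linarith [ht'.1])]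
      exact (hfp t ht').symm
    have hueq : u' = ustar := huniq u' hufix
    intro t ht
    have h1 : z' t = u' ⟨t, ht⟩ := rfl
    rw [h1, hueq, ← hzval t ht]
  -- continuity of the constructed solution on [-τ, T]
  have hVc : ContinuousOn (Vop n ψ z) (Icc (-τ) T) :=
    ((vop_continuous hψ'c hzc).continuousOn).congr fun t ht => hVagree z t ht.1
  -- initial data
  have hinit : ∀ t ∈ Icc (-τ) (0:ℝ), Vop n ψ z t = ψ t := by
    intro t ht
    unfold Vop
    rw [if_pos ht.2]
  -- the integrated equation
  have hivp : ∀ t ∈ Icc (0:ℝ) T,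
      Vop n ψ z t = ψ 0 + ∫ s in (0:ℝ)..t, (A s (Vop n ψ z s) + B s (Vop n ψ z (s - τ))) := by
    intro t ht
    rcases eq_or_lt_of_le ht.1 with h0 | h0
    · rw [← h0]
      have hV0 : Vop n ψ z 0 = ψ 0 := by unfold Vop; simp
      rw [hV0, intervalIntegral.integral_same]
      simp
    · have hL : Vop n ψ z t = ψ 0 + ∫ σ in (0:ℝ)..t, z σ := by
        unfold Vop
        rw [if_neg (not_le.2 h0)]
      rw [hL]
      congr 1
      apply intervalIntegral.integral_congr
      intro s hs
      rw [uIcc_of_le ht.1] at hs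
      exact heq s ⟨hs.1, hs.2.trans ht.2⟩
  -- uniqueness of the integrated solution
  have hyu : ∀ y : ℝ → Fin n → ℝ, ContinuousOn y (Icc (-τ) T) →
      (∀ t ∈ Icc (-τ) (0:ℝ), y t = ψ t) →
      (∀ t ∈ Icc (0:ℝ) T, y t = ψ 0 + ∫ s in (0:ℝ)..t, (A s (y s) + B s (y (s - τ)))) →
      EqOn y (Vop n ψ z) (Icc (-τ) T) := by
    intro y hyc hyinit hyint
    set z'' : ℝ → Fin n → ℝ := fun s => A s (y s) + B s (y (s - τ)) with hz''def
    have key : ∀ s ∈ Icc (-τ) T, Vop n ψ z'' s = y s := by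
      intro s hs
      unfold Vop
      split_ifs with h
      · exact (hyinit s ⟨hs.1, h⟩).symm
      · push_neg at h
        simp only [hz''def]
        exact (hyint s ⟨h.le, hs.2⟩).symm
    have hz''fp : ∀ t ∈ Icc (0:ℝ) T,
        z'' t = A t (Vop n ψ z'' t) + B t (Vop n ψ z'' (t - τ)) := by
      intro t ht
      rw [key t ⟨by linarith [ht.1], ht.2⟩,
        key (t - τ) ⟨by linarith [ht.1], by linarith [ht.2]⟩]
    have hz''c : ContinuousOn z'' (Icc (0:ℝ) T) := by
      apply ContinuousOn.add
      · exact (hA.continuousOn).clm_apply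
          (hyc.mono (Icc_subset_Icc (by linarith) le_rfl))
      · apply (hB.continuousOn).clm_apply
        apply hyc.comp (continuous_id.sub continuous_const).continuousOn
        intro s hs
        refine ⟨?_, ?_⟩ <;> simp only [Pi.sub_apply, id] <;> [linarith [hs.1]; linarith [hs.2]]
    have hz''z : EqOn z'' z (Icc (0:ℝ) T) := huz z'' hz''c hz''fp
    intro t ht
    rw [← key t ht, hVagree z'' t ht.1, hVagree z t ht.1]
    exact hVcongr z'' z hz''z t ht.2
  -- the derivative statement
  have hder : ∀ t ∈ Ioo (0:ℝ) T, HasDerivAt (Vop n ψ z) (z t) t := by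
    intro t ht
    have hev : Vop n ψ z =ᶠ[nhds t] fun s => ψ 0 + ∫ σ in (0:ℝ)..s, z σ := by
      filter_upwards [isOpen_Ioi.mem_nhds ht.1] with s hs
      unfold Vop
      rw [if_neg (not_le.2 hs)]
    have hd : HasDerivAt (fun s => ψ 0 + ∫ σ in (0:ℝ)..s, z σ) (z t) t := by
      have := intervalIntegral.integral_hasDerivAt_right (hzc.intervalIntegrable 0 t)
        (hzc.stronglyMeasurable.stronglyMeasurableAtFilter) hzc.continuousAt
      exact this.const_add (ψ 0)
    exact hd.congr_of_eventuallyEq hev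
  exact ⟨z, ⟨hzc.continuousOn, heq⟩, fun z' h => huz z' h.1 h.2, ⟨hVc, hinit, hivp⟩,
    fun y h => hyu y h.1 h.2.1 h.2.2, hder⟩
end
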